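/- Let N be a prime number and let L ⊆ ℤ^N be a cyclic sublattice (a ℤ-submodule invariant under the cyclic shift s) such that the quotient group ℤ^N/L is torsion-free. Then L is one of the following four submodules: (a) the zero submodule 0; (b) the diagonal {(x, x, …, x) : x ∈ ℤ}; (c) the sum-zero hyperplane {(x_1, …, x_N) ∈ ℤ^N : x_1 + ⋯ + x_N = 0}; (d) the full lattice ℤ^N. Conversely, each of these four submodules is cyclic with torsion-free quotient. -/

import Mathlib

open Polynomial

namespace Stmt1Aux

open Fin.NatCast

variable {N : ℕ} [NeZero N]

def shiftL (N : ℕ) [NeZero N] : Module.End ℤ (Fin N → ℤ) where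
  toFun a := fun i => a (i - 1)
  map_add' _ _ := rfl
  map_smul' _ _ := rfl

lemma shiftL_apply (a : Fin N → ℤ) (i : Fin N) : shiftL N a i = a (i - 1) := rfl

lemma shiftL_pow (k : ℕ) (a : Fin N → ℤ) (i : Fin N) :
    ((shiftL N) ^ k) a i = a (i - (k : Fin N)) := by
  induction k generalizing a i with
  | zero => simp
  | succ k ih =>
    rw [pow_succ', Module.End.mul_apply, shiftL_apply, ih]
    congr 1
    push_cast
    abel

lemma shiftL_pow_single (k : ℕ) (j : Fin N) :
    ((shiftL N) ^ k) (Pi.single j 1) = Pi.single (j + (k : Fin N)) (1 : ℤ) := by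
  funext i
  rw [shiftL_pow]
  simp [Pi.single_apply, sub_eq_iff_eq_add]

lemma shiftL_pow_N : (shiftL N) ^ N = 1 := by
  apply LinearMap.ext; intro a
  funext i
  rw [shiftL_pow]
  simp

lemma aeval_mem (L : Submodule ℤ (Fin N → ℤ)) (hinv : ∀ a ∈ L, shiftL N a ∈ L)
    (P : ℤ[X]) : ∀ a ∈ L, (aeval (shiftL N) P) a ∈ L := by
  induction P using Polynomial.induction_on with
  | C n => intro a ha; simpa [Module.algebraMap_end_apply] using L.smul_mem n ha
  | add p q hp hq => intro a ha; simpa [map_add] using L.add_mem (hp a ha) (hq a ha)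
  | monomial n c ih =>
    intro a ha
    have : (C c * X ^ (n + 1) : ℤ[X]) = (C c * X ^ n) * X := by ring
    rw [this, map_mul, Module.End.mul_apply]
    exact ih _ (by simpa [aeval_X] using hinv a ha)

noncomputable def polyOf (a : Fin N → ℤ) : ℤ[X] := ∑ i : Fin N, C (a i) * X ^ (i : ℕ)

lemma sum_smul_single (a : Fin N → ℤ) : ∑ i : Fin N, a i • Pi.single i (1 : ℤ) = a := by
  funext j
  simp [Finset.sum_apply, Pi.single_apply, Finset.sum_ite_eq]

lemma aeval_polyOf (a : Fin N → ℤ) :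
    (aeval (shiftL N) (polyOf a)) (Pi.single (0 : Fin N) 1) = a := by
  rw [polyOf, map_sum, LinearMap.sum_apply]
  have h : ∀ i : Fin N, (aeval (shiftL N) (C (a i) * X ^ (i : ℕ))) (Pi.single (0 : Fin N) 1)
      = a i • Pi.single i (1 : ℤ) := by
    intro i
    rw [map_mul, aeval_C, map_pow, aeval_X, Module.End.mul_apply,
      shiftL_pow_single, Module.algebraMap_end_apply]
    congr 1
    simp [Fin.cast_val_eq_self]
  simp_rw [h]
  exact sum_smul_single a

lemma coeff_polyOf (a : Fin N → ℤ) (j : Fin N) : (polyOf a).coeff (j : ℕ) = a j := by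
  rw [polyOf, finset_sum_coeff]
  have h : ∀ i : Fin N, (C (a i) * X ^ (i : ℕ)).coeff (j : ℕ) = if i = j then a i else 0 := by
    intro i
    rw [coeff_C_mul, coeff_X_pow]
    by_cases hij : i = j
    · simp [hij]
    · rw [if_neg (fun h : (j : ℕ) = (i : ℕ) => hij (Fin.val_injective h).symm), mul_zero,
        if_neg hij]
  simp_rw [h]
  simp

lemma polyOf_ne_zero {a : Fin N → ℤ} (ha : a ≠ 0) : polyOf a ≠ 0 := by
  intro h
  apply ha
  funext j
  have := coeff_polyOf a j
  rw [h] at this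
  simpa using this.symm

lemma degree_polyOf (a : Fin N → ℤ) : (polyOf a).degree < N := by
  apply lt_of_le_of_lt (degree_sum_le _ _)
  rw [Finset.sup_lt_iff (by exact_mod_cast WithBot.bot_lt_coe N)]
  intro i _
  exact lt_of_le_of_lt (degree_C_mul_X_pow_le _ _) (by exact_mod_cast i.isLt)

lemma isRoot_polyOf {a : Fin N → ℤ} (hs : ∑ i, a i = 0) : (polyOf a).IsRoot 1 := by
  simp [IsRoot, polyOf, eval_finset_sum, hs]

lemma bezout {N : ℕ} (hN : N.Prime) (A : ℤ[X]) (hA : A ≠ 0) (hdeg : A.degree < N)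
    (hroot : A.IsRoot 1) :
    ∃ (u v : ℤ[X]) (m : ℤ), m ≠ 0 ∧ v * A + u * (X ^ N - 1) = C m * (X - 1) := by
  haveI : Fact N.Prime := ⟨hN⟩
  obtain ⟨B, hB⟩ : (X - 1 : ℤ[X]) ∣ A := by
    simpa using (dvd_iff_isRoot (a := (1 : ℤ))).mpr hroot
  set f := Int.castRingHom ℚ with hf
  have hfinj : Function.Injective f := Int.cast_injective
  set Aq := A.map f with hAq
  set Bq := B.map f with hBq
  have hΦirr := cyclotomic.irreducible_rat (n := N) hN.pos
  have hXN : (X - 1 : ℚ[X]) * cyclotomic N ℚ = X ^ N - 1 := by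
    rw [mul_comm]; exact cyclotomic_prime_mul_X_sub_one ℚ N
  have hAqB : Aq = (X - 1) * Bq := by
    rw [hAq, hB, Polynomial.map_mul]; simp [hBq]
  have hnot : ¬ (cyclotomic N ℚ ∣ Bq) := by
    rintro ⟨W, hW⟩
    have hAq0 : Aq ≠ 0 := (Polynomial.map_ne_zero_iff hfinj).mpr hA
    have hW0 : W ≠ 0 := by
      rintro rfl; rw [hW, mul_zero, mul_zero] at hAqB; exact hAq0 hAqB
    have hdegq : Aq.degree < N := by
      rwa [hAq, degree_map_eq_of_injective hfinj]
    have heq : Aq = (X ^ N - 1) * W := by rw [hAqB, hW, ← mul_assoc, hXN]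
    have hd1 : ((X : ℚ[X]) ^ N - 1).degree = (N : WithBot ℕ) := by
      simpa using degree_X_pow_sub_C hN.pos (1 : ℚ)
    rw [heq, degree_mul, hd1] at hdegq
    have h0 : (0 : WithBot ℕ) ≤ W.degree := zero_le_degree_iff.mpr hW0
    have : (N : WithBot ℕ) ≤ (N : WithBot ℕ) + W.degree := le_add_of_nonneg_right h0
    exact absurd (lt_of_le_of_lt this hdegq) (lt_irrefl _)
  have hco : IsCoprime (cyclotomic N ℚ) Bq := (hΦirr.coprime_iff_not_dvd).mpr hnot
  obtain ⟨Uq, Vq, hUV⟩ := hco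
  have key : Uq * (X ^ N - 1) + Vq * Aq = X - 1 := by
    have := congrArg (· * (X - 1)) hUV
    simp only [add_mul, one_mul] at this
    calc Uq * (X ^ N - 1) + Vq * Aq
        = Uq * cyclotomic N ℚ * (X - 1) + Vq * Bq * (X - 1) := by
          rw [hAqB, ← hXN]; ring
      _ = X - 1 := this
  obtain ⟨m₁, hm₁⟩ := IsLocalization.integerNormalization_map_to_map (nonZeroDivisors ℤ) Uq
  obtain ⟨m₂, hm₂⟩ := IsLocalization.integerNormalization_map_to_map (nonZeroDivisors ℤ) Vq
  set u₁ := IsLocalization.integerNormalization (nonZeroDivisors ℤ) Uq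
  set v₁ := IsLocalization.integerNormalization (nonZeroDivisors ℤ) Vq
  refine ⟨C (m₂ : ℤ) * u₁, C (m₁ : ℤ) * v₁, (m₁ : ℤ) * (m₂ : ℤ),
    mul_ne_zero (nonZeroDivisors.coe_ne_zero m₁) (nonZeroDivisors.coe_ne_zero m₂), ?_⟩
  apply Polynomial.map_injective f hfinj
  have halg : (algebraMap ℤ ℚ) = f := rfl
  have hsm : ∀ (m : ℤ) (p : ℚ[X]), (m : ℤ) • p = C (m : ℚ) * p := by
    intro m p
    rw [zsmul_eq_mul]
    norm_cast
  rw [halg] at hm₁ hm₂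
  have e1 : u₁.map f = C ((m₁ : ℤ) : ℚ) * Uq := by rw [hm₁, hsm]
  have e2 : v₁.map f = C ((m₂ : ℤ) : ℚ) * Vq := by rw [hm₂, hsm]
  have hmapeq : ∀ (k : ℤ), (C k : ℤ[X]).map f = C ((k : ℚ)) := by intro k; simp [hf]
  simp only [Polynomial.map_add, Polynomial.map_mul, Polynomial.map_sub, Polynomial.map_pow,
    Polynomial.map_X, Polynomial.map_one, hmapeq, e1, e2]
  push_cast [C_mul]
  linear_combination (C ((m₁ : ℤ) : ℚ) * C ((m₂ : ℤ) : ℚ)) * key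

variable {N : ℕ} [NeZero N]

lemma single_sub_single_mem (hN : N.Prime) (L : Submodule ℤ (Fin N → ℤ))
    (hinv : ∀ a ∈ L, shiftL N a ∈ L)
    (hsat : ∀ (n : ℤ) (b : Fin N → ℤ), n ≠ 0 → n • b ∈ L → b ∈ L)
    {a : Fin N → ℤ} (ha : a ∈ L) (ha0 : a ≠ 0) (hs : ∑ i, a i = 0) :
    ∀ b : Fin N → ℤ, (∑ i, b i = 0) → b ∈ L := by
  obtain ⟨u, v, m, hm, huv⟩ := bezout hN (polyOf a) (polyOf_ne_zero ha0)
    (degree_polyOf a) (isRoot_polyOf hs)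
  -- apply aeval at shiftL, evaluate at e₀
  set S := shiftL N
  have hXN0 : aeval S ((X : ℤ[X]) ^ N - 1) = 0 := by
    rw [map_sub, map_pow, aeval_X, map_one, shiftL_pow_N, sub_self]
  have hLHS : (aeval S (v * polyOf a + u * ((X : ℤ[X]) ^ N - 1))) (Pi.single (0 : Fin N) 1)
      = (aeval S v) a := by
    rw [map_add, map_mul, map_mul, LinearMap.add_apply, Module.End.mul_apply,
      Module.End.mul_apply, aeval_polyOf, hXN0]
    simp
  have hRHS : (aeval S (C m * ((X : ℤ[X]) - 1))) (Pi.single (0 : Fin N) 1)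
      = m • (Pi.single (1 : Fin N) 1 - Pi.single (0 : Fin N) 1) := by
    rw [map_mul, aeval_C, Module.End.mul_apply, map_sub, aeval_X, map_one,
      Module.algebraMap_end_apply]
    congr 1
    rw [LinearMap.sub_apply, Module.End.one_apply]
    congr 2
    have := shiftL_pow_single (N := N) 1 (0 : Fin N)
    simpa using this
  have hmem : m • (Pi.single (1 : Fin N) 1 - Pi.single (0 : Fin N) 1) ∈ L := by
    rw [← hRHS, ← huv, hLHS]
    exact aeval_mem L hinv v a ha
  have hd : (Pi.single (1 : Fin N) 1 - Pi.single (0 : Fin N) 1 : Fin N → ℤ) ∈ L :=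
    hsat m _ hm hmem
  -- all consecutive differences
  have hdk : ∀ k : ℕ, (Pi.single ((k : Fin N) + 1) 1 - Pi.single (k : Fin N) 1 : Fin N → ℤ) ∈ L := by
    intro k
    have := aeval_mem L hinv (X ^ k) _ hd
    rw [map_pow, aeval_X] at this
    rw [map_sub, shiftL_pow_single, shiftL_pow_single] at this
    rw [add_comm, zero_add] at this
    exact this
  -- single j - single 0 ∈ L
  have hg : ∀ k : ℕ, (Pi.single ((k : Fin N)) 1 - Pi.single (0 : Fin N) 1 : Fin N → ℤ) ∈ L := by
    intro k
    induction k with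
    | zero => simpa using L.zero_mem
    | succ k ih =>
      have := L.add_mem (hdk k) ih
      rw [sub_add_sub_cancel] at this
      rw [Nat.cast_add, Nat.cast_one]
      exact this
  have hgj : ∀ j : Fin N, (Pi.single j 1 - Pi.single (0 : Fin N) 1 : Fin N → ℤ) ∈ L := by
    intro j
    have := hg (j : ℕ)
    rwa [Fin.cast_val_eq_self] at this
  intro b hb
  have hbeq : b = ∑ j : Fin N, b j • (Pi.single j 1 - Pi.single (0 : Fin N) 1 : Fin N → ℤ) := by
    have h1 : ∑ j : Fin N, b j • (Pi.single j (1 : ℤ)) = b := sum_smul_single b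
    calc b = ∑ j : Fin N, b j • (Pi.single j (1 : ℤ))
            - ∑ j : Fin N, b j • (Pi.single (0 : Fin N) (1 : ℤ)) := by
          rw [h1, ← Finset.sum_smul, hb, zero_smul, sub_zero]
      _ = _ := by rw [← Finset.sum_sub_distrib]; simp [smul_sub]
  rw [hbeq]
  exact L.sum_mem fun j _ => L.smul_mem _ (hgj j)

lemma tf_iff_sat {M : Type*} [AddCommGroup M] [Module ℤ M] (L : Submodule ℤ M) :
    (∀ g : M ⧸ L, g ≠ 0 → ¬IsOfFinAddOrder g) ↔
      ∀ (n : ℤ) (a : M), n ≠ 0 → n • a ∈ L → a ∈ L := by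
  constructor
  · intro h n a hn hna
    by_contra hmem
    have hg : (Submodule.Quotient.mk a : M ⧸ L) ≠ 0 := by
      rw [Ne, Submodule.Quotient.mk_eq_zero]; exact hmem
    apply h _ hg
    rw [isOfFinAddOrder_iff_nsmul_eq_zero]
    refine ⟨n.natAbs, Int.natAbs_pos.mpr hn, ?_⟩
    have hz : (n : ℤ) • (Submodule.Quotient.mk a : M ⧸ L) = 0 := by
      rw [← Submodule.Quotient.mk_smul, Submodule.Quotient.mk_eq_zero]
      exact hna
    have : ((n.natAbs : ℤ)) • (Submodule.Quotient.mk a : M ⧸ L) = 0 := by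
      rcases Int.natAbs_eq n with h' | h'
      · rw [← h', hz]
      · rw [h', neg_smul, neg_eq_zero] at hz
        exact hz
    rw [← this, natCast_zsmul]
  · intro h g hg hfin
    obtain ⟨n, hn, hng⟩ := isOfFinAddOrder_iff_nsmul_eq_zero.mp hfin
    obtain ⟨a, rfl⟩ := Submodule.Quotient.mk_surjective L g
    apply hg
    rw [Submodule.Quotient.mk_eq_zero]
    refine h n a (by exact_mod_cast hn.ne') ?_
    have : (n : ℤ) • (Submodule.Quotient.mk a : M ⧸ L) = 0 := by
      rw [natCast_zsmul]; exact hng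
    rwa [← Submodule.Quotient.mk_smul, Submodule.Quotient.mk_eq_zero] at this

lemma shift_eq_shiftL (hN : N.Prime) (a : Fin N → ℤ) :
    (fun i : Fin N => a ⟨((i : ℕ) + (N - 1)) % N, Nat.mod_lt _ hN.pos⟩) = shiftL N a := by
  funext i
  rw [shiftL_apply]
  congr 1
  rw [Fin.sub_def]
  apply Fin.ext
  simp only []
  have h1 : ((1 : Fin N) : ℕ) = 1 % N := Fin.val_one' N
  rw [h1, Nat.mod_eq_of_lt hN.one_lt, Nat.add_comm]

lemma sum_shiftL (a : Fin N → ℤ) : ∑ i, shiftL N a i = ∑ i, a i := by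
  simp only [shiftL_apply]
  exact Equiv.sum_comp (Equiv.subRight (1 : Fin N)) a

lemma sum_shiftL_pow (c : Fin N → ℤ) :
    ∑ k ∈ Finset.range N, ((shiftL N) ^ k) c = (∑ i, c i) • (fun _ => (1 : ℤ)) := by
  funext i
  rw [Finset.sum_apply]
  have h : ∀ k ∈ Finset.range N, ((shiftL N) ^ k) c i = c (i - (k : Fin N)) :=
    fun k _ => shiftL_pow k c i
  rw [Finset.sum_congr rfl h, ← Fin.sum_univ_eq_sum_range (fun k => c (i - (k : Fin N)))]
  have h2 : ∀ k : Fin N, c (i - ((k : ℕ) : Fin N)) = c (Equiv.subLeft i k) := by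
    intro k; rw [Fin.cast_val_eq_self]; rfl
  rw [Finset.sum_congr rfl (fun k _ => h2 k), Equiv.sum_comp (Equiv.subLeft i) c]
  simp

end Stmt1Aux

open Stmt1Aux in
/-- Let `N` be a prime and `L ⊆ ℤ^N` a cyclic sublattice (a `ℤ`-submodule
invariant under the cyclic shift `s`, where `(s a) i = a ((i + (N-1)) % N)`) such that the
quotient group `ℤ^N/L` is torsion-free. Then `L` is one of: the zero submodule, the diagonal,
the sum-zero hyperplane, or all of `ℤ^N`; and conversely each of these four is a cyclic
sublattice with torsion-free quotient. -/
theorem stmt_1 (N : ℕ) (hN : N.Prime) (L : Submodule ℤ (Fin N → ℤ)) :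
    ((∀ a ∈ L, (fun i : Fin N => a ⟨((i : ℕ) + (N - 1)) % N, Nat.mod_lt _ hN.pos⟩) ∈ L) ∧
        (∀ g : (Fin N → ℤ) ⧸ L, g ≠ 0 → ¬IsOfFinAddOrder g)) ↔
      (L = ⊥ ∨
        (L : Set (Fin N → ℤ)) = {a : Fin N → ℤ | ∃ x : ℤ, a = fun _ => x} ∨
        (L : Set (Fin N → ℤ)) = {a : Fin N → ℤ | ∑ i, a i = 0} ∨
        L = ⊤) := by
  haveI : NeZero N := ⟨hN.ne_zero⟩
  rw [tf_iff_sat]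
  simp only [shift_eq_shiftL hN]
  constructor
  · rintro ⟨hinv0, hsat⟩
    have hinv : ∀ a ∈ L, shiftL N a ∈ L := hinv0
    by_cases hbot : L = ⊥
    · exact Or.inl hbot
    obtain ⟨a, haL, ha0⟩ := Submodule.exists_mem_ne_zero_of_ne_bot hbot
    by_cases hall : ∀ c ∈ L, ∑ i, c i = 0
    · right; right; left
      apply Set.Subset.antisymm
      · intro c hc; exact hall c hc
      · intro b hb
        exact single_sub_single_mem hN L hinv hsat haL ha0 (hall a haL) b hb
    · push_neg at hall
      obtain ⟨c, hcL, hcs⟩ := hall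
      have hsum : ∑ k ∈ Finset.range N, ((shiftL N) ^ k) c ∈ L :=
        Submodule.sum_mem _ fun k _ => by
          have := aeval_mem L hinv (X ^ k) c hcL
          rwa [map_pow, aeval_X] at this
      rw [sum_shiftL_pow] at hsum
      have hone : (fun _ => (1 : ℤ)) ∈ L := hsat (∑ i, c i) _ hcs hsum
      by_cases hzero : ∀ b ∈ L, (∑ i, b i = 0) → b = 0
      · right; left
        apply Set.Subset.antisymm
        · intro b hbL
          set m := ∑ i, b i with hm
          have hc1 : ((N : ℤ) • b - m • (fun _ => (1 : ℤ)) : Fin N → ℤ) ∈ L :=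
            L.sub_mem (L.smul_mem _ hbL) (L.smul_mem _ hone)
          have hcs0 : ∑ i, ((N : ℤ) • b - m • (fun _ => (1 : ℤ)) : Fin N → ℤ) i = 0 := by
            simp only [Pi.sub_apply, Pi.smul_apply, smul_eq_mul, mul_one,
              Finset.sum_sub_distrib, ← Finset.mul_sum, ← hm]
            rw [Finset.sum_const, Finset.card_univ, Fintype.card_fin]
            push_cast
            ring
          have hzz := hzero _ hc1 hcs0
          have heq : (N : ℤ) • b = m • (fun _ => (1 : ℤ)) := by
            rwa [sub_eq_zero] at hzz
          refine ⟨b 0, funext fun i => ?_⟩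
          have hi := congrFun heq i
          have h0 := congrFun heq 0
          simp only [Pi.smul_apply, smul_eq_mul, mul_one] at hi h0
          have : (N : ℤ) * b i = (N : ℤ) * b 0 := by rw [hi, h0]
          exact mul_left_cancel₀ (by exact_mod_cast hN.ne_zero) this
        · rintro b ⟨x, rfl⟩
          have hx : (fun _ : Fin N => x) = (x • (fun _ => (1 : ℤ)) : Fin N → ℤ) := by
            funext; simp
          rw [hx]; exact L.smul_mem x hone
      · push_neg at hzero
        obtain ⟨b, hbL, hbs, hb0⟩ := hzero
        right; right; right
        have hsz := single_sub_single_mem hN L hinv hsat hbL hb0 hbs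
        have hc1 : ((N : ℤ) • Pi.single (0 : Fin N) 1 - (fun _ => (1 : ℤ)) : Fin N → ℤ) ∈ L := by
          apply hsz
          simp only [Pi.sub_apply, Pi.smul_apply, smul_eq_mul, Finset.sum_sub_distrib]
          rw [Finset.sum_const, Finset.card_univ, Fintype.card_fin, ← Finset.mul_sum]
          simp
        have hNe0 : (N : ℤ) • Pi.single (0 : Fin N) (1 : ℤ) ∈ L := by
          have := L.add_mem hc1 hone
          simpa using this
        have he0 : Pi.single (0 : Fin N) (1 : ℤ) ∈ L :=
          hsat N _ (by exact_mod_cast hN.ne_zero) hNe0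
        have hej : ∀ j : Fin N, Pi.single j (1 : ℤ) ∈ L := by
          intro j
          have := aeval_mem L hinv (X ^ (j : ℕ)) _ he0
          rw [map_pow, aeval_X, shiftL_pow_single] at this
          simpa [Fin.cast_val_eq_self] using this
        rw [Submodule.eq_top_iff']
        intro b
        rw [← sum_smul_single b]
        exact L.sum_mem fun j _ => L.smul_mem _ (hej j)
  · intro h
    rcases h with rfl | hdiag | hsz | rfl
    · refine ⟨fun a ha => ?_, fun n a hn hna => ?_⟩
      · rw [Submodule.mem_bot] at ha
        subst ha
        rw [map_zero]
        exact (⊥ : Submodule ℤ (Fin N → ℤ)).zero_mem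
      · rw [Submodule.mem_bot] at hna ⊢
        exact (smul_eq_zero.mp hna).resolve_left hn
    · have hm : ∀ x : Fin N → ℤ, x ∈ L ↔ ∃ y : ℤ, x = fun _ => y := by
        intro x
        rw [← SetLike.mem_coe, hdiag]
        exact Iff.rfl
      refine ⟨fun a ha => ?_, fun n a hn hna => ?_⟩
      · obtain ⟨y, rfl⟩ := (hm a).mp ha
        exact (hm _).mpr ⟨y, rfl⟩
      · obtain ⟨y, hy⟩ := (hm _).mp hna
        refine (hm a).mpr ⟨a 0, funext fun i => ?_⟩
        have hi := congrFun hy i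
        have h0 := congrFun hy 0
        simp only [Pi.smul_apply, smul_eq_mul] at hi h0
        exact mul_left_cancel₀ hn (by rw [hi, h0])
    · have hm : ∀ x : Fin N → ℤ, x ∈ L ↔ ∑ i, x i = 0 := by
        intro x
        rw [← SetLike.mem_coe, hsz]
        exact Iff.rfl
      refine ⟨fun a ha => ?_, fun n a hn hna => ?_⟩
      · rw [hm, sum_shiftL]
        exact (hm a).mp ha
      · rw [hm] at hna ⊢
        have : n * ∑ i, a i = 0 := by
          rw [Finset.mul_sum]
          simpa using hna
        exact (mul_eq_zero.mp this).resolve_left hn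
    · exact ⟨fun a _ => Submodule.mem_top, fun n a _ _ => Submodule.mem_top⟩
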